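/- If σ > 1 and P_n(x) is the top-left entry of ((diag(e^{iφ}, e^{−iφ})) · [[x, √(x²−1)],[√(x²−1), x]])^n with cos φ = 1/σ, then for all x with 1 ≤ x < σ, the modulus |P_n(x)| is bounded above by (1 + x tan φ / √(sec²φ − x²)), a bound independent of n. -/

import Mathlib

set_option maxHeartbeats 1000000


open Matrix Complex

/-- The constant-phase SU(1,1) QSP iterate `e^{iφσ_z} V(x)`. -/
noncomputable def iterate18 (φ x : ℝ) : Matrix (Fin 2) (Fin 2) ℂ :=
  !![Complex.exp (Complex.I * φ), 0; 0, Complex.exp (-(Complex.I * φ))] *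
    !![(x : ℂ), (Real.sqrt (x ^ 2 - 1) : ℂ); (Real.sqrt (x ^ 2 - 1) : ℂ), (x : ℂ)]

/-- For `1 ≤ x < σ = sec φ`, the modulus of the top-left entry of the
constant-phase product is bounded above, independently of `n`, by
`1 + x tan φ / √(sec²φ - x²)`. -/
theorem constant_phase_upper_bound (σ φ : ℝ) (hσ : 1 < σ)
    (hφ : φ ∈ Set.Ioo 0 (Real.pi / 2)) (hcos : Real.cos φ = 1 / σ) :
    ∀ (n : ℕ) (x : ℝ), 1 ≤ x → x < σ →
      ‖((iterate18 φ x) ^ n) 0 0‖ ≤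
        1 + x * Real.tan φ / Real.sqrt ((1 / Real.cos φ) ^ 2 - x ^ 2) := by
  obtain ⟨hφ0, hφ2⟩ := hφ
  have hcpos : 0 < Real.cos φ := by rw [hcos]; positivity
  have hspos : 0 < Real.sin φ := Real.sin_pos_of_pos_of_lt_pi hφ0 (by linarith [Real.pi_pos])
  intro n x hx1 hxσ
  set c : ℝ := x * Real.cos φ with hc
  have hc1 : c < 1 := by
    calc c = x * (1/σ) := by rw [hc, hcos]
    _ < σ * (1/σ) := mul_lt_mul_of_pos_right hxσ (by positivity)
    _ = 1 := by field_simp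
  have hc0 : 0 < c := by positivity
  set s : ℝ := Real.sqrt (1 - c ^ 2) with hsdef
  have hs2 : s ^ 2 = 1 - c ^ 2 := Real.sq_sqrt (by nlinarith)
  have hs0 : 0 < s := Real.sqrt_pos.mpr (by nlinarith)
  set r : ℝ := x * Real.sin φ / s with hr
  have hr0 : 0 ≤ r := by positivity
  set α : ℝ := (1 + r) / 2 with hα
  set β : ℝ := (1 - r) / 2 with hβ
  set lam : ℂ := (c : ℂ) + Complex.I * s with hlam
  set lam' : ℂ := (c : ℂ) - Complex.I * s with hlam'
  clear_value lam' lam α β r s c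
  have hs2C : ((s:ℝ) : ℂ)^2 = 1 - (c:ℂ)^2 := by
    rw [← Complex.ofReal_pow, hs2]; push_cast; ring
  have hll : lam * lam' = 1 := by
    rw [hlam, hlam']
    linear_combination (-((s:ℝ):ℂ)^2) * Complex.I_sq + hs2C
  have hllsum : lam + lam' = 2 * (c : ℂ) := by rw [hlam, hlam']; ring
  -- Cayley-Hamilton
  have hu : ((Real.sqrt (x ^ 2 - 1) : ℝ) : ℂ) ^ 2 = (x:ℂ)^2 - 1 := by
    rw [← Complex.ofReal_pow, Real.sq_sqrt (by nlinarith)]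
    push_cast; ring
  have hE : Complex.exp (Complex.I * φ) * Complex.exp (-(Complex.I * φ)) = 1 := by
    rw [← Complex.exp_add]; simp
  have hEeq : Complex.exp (Complex.I * φ) = Complex.cos φ + Complex.sin φ * Complex.I := by
    rw [mul_comm, Complex.exp_mul_I]
  have hsum : Complex.exp (Complex.I * φ) + Complex.exp (-(Complex.I * φ))
      = 2 * Complex.cos (φ : ℂ) := by
    have h2 : Complex.exp (-(Complex.I * φ)) = Complex.cos φ - Complex.sin φ * Complex.I := by
      have h3 : -(Complex.I * φ) = (↑(-φ) : ℂ) * Complex.I := by push_cast; ring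
      rw [h3, Complex.exp_mul_I, Complex.ofReal_neg, Complex.cos_neg, Complex.sin_neg]; ring
    rw [hEeq, h2]; ring
  have hM : iterate18 φ x = !![(x:ℂ) * Complex.exp (Complex.I * φ),
      (Real.sqrt (x ^ 2 - 1) : ℂ) * Complex.exp (Complex.I * φ);
      (Real.sqrt (x ^ 2 - 1) : ℂ) * Complex.exp (-(Complex.I * φ)),
      (x:ℂ) * Complex.exp (-(Complex.I * φ))] := by
    simp [iterate18, Matrix.mul_fin_two]
    exact ⟨⟨mul_comm _ _, mul_comm _ _⟩, mul_comm _ _, mul_comm _ _⟩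
  have hCH : iterate18 φ x * iterate18 φ x
      = (2 * (c : ℝ) : ℂ) • iterate18 φ x - 1 := by
    rw [hM]
    ext i j
    fin_cases i <;> fin_cases j <;>
      simp [Matrix.mul_fin_two, Matrix.smul_apply, Matrix.one_apply, hc]
    · linear_combination (Complex.exp (Complex.I*φ) * Complex.exp (-(Complex.I*φ))) * hu
        - hE + (x:ℂ)^2 * Complex.exp (Complex.I*φ) * hsum
    · linear_combination (x:ℂ) * (Real.sqrt (x ^ 2 - 1) : ℂ) * Complex.exp (Complex.I*φ) * hsum
    · linear_combination (x:ℂ) * (Real.sqrt (x ^ 2 - 1) : ℂ) * Complex.exp (-(Complex.I*φ)) * hsum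
    · linear_combination (Complex.exp (Complex.I*φ) * Complex.exp (-(Complex.I*φ))) * hu
        - hE + (x:ℂ)^2 * Complex.exp (-(Complex.I*φ)) * hsum
  -- closed form for the top-left entry
  have hαβ1 : ((α:ℝ) : ℂ) + ((β:ℝ) : ℂ) = 1 := by
    rw [hα, hβ]; push_cast; ring
  have hαβ2 : ((α:ℝ) : ℂ) - ((β:ℝ) : ℂ) = ((r:ℝ) : ℂ) := by
    rw [hα, hβ]; push_cast; ring
  have hsrC : ((s:ℝ):ℂ) * ((r:ℝ):ℂ) = (x:ℂ) * Complex.sin (φ:ℂ) := by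
    rw [← Complex.ofReal_mul, ← Complex.ofReal_sin, ← Complex.ofReal_mul]
    congr 1
    rw [hr]
    field_simp
  have hcC : ((c:ℝ):ℂ) = (x:ℂ) * Complex.cos (φ:ℂ) := by
    rw [hc, ← Complex.ofReal_cos, ← Complex.ofReal_mul]
  have key : ∀ m : ℕ, ((iterate18 φ x) ^ m) 0 0 = (α : ℂ) * lam ^ m + (β : ℂ) * lam' ^ m ∧
      ((iterate18 φ x) ^ (m+1)) 0 0 = (α : ℂ) * lam ^ (m+1) + (β : ℂ) * lam' ^ (m+1) := by
    intro m
    induction m with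
    | zero =>
      constructor
      · simp [Matrix.one_apply]
        linear_combination -hαβ1
      · rw [pow_one, hM]
        simp [hEeq]
        rw [hlam, hlam']
        linear_combination (-((c:ℝ):ℂ)) * hαβ1 + (-(Complex.I * ((s:ℝ):ℂ))) * hαβ2
          + (-Complex.I) * hsrC + (-1 : ℂ) * hcC
    | succ k ih =>
      obtain ⟨ih0, ih1⟩ := ih
      refine ⟨ih1, ?_⟩
      have hpow : (iterate18 φ x) ^ (k + 2)
          = (iterate18 φ x) ^ k * ((iterate18 φ x) * (iterate18 φ x)) := by
        rw [pow_succ, pow_succ, mul_assoc]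
      have hrec : ((iterate18 φ x) ^ (k+2)) 0 0
          = (2 * (c:ℝ) : ℂ) * ((iterate18 φ x) ^ (k+1)) 0 0 - ((iterate18 φ x) ^ k) 0 0 := by
        rw [hpow, hCH, Matrix.mul_sub, Matrix.mul_one, mul_smul_comm, ← pow_succ]
        simp [Matrix.sub_apply, Matrix.smul_apply]
        try ring
      rw [hrec, ih0, ih1]
      have h2 : lam ^ (k+2) = 2 * (c:ℂ) * lam ^ (k+1) - lam ^ k := by
        have hl2 : lam ^ 2 = 2 * (c:ℂ) * lam - 1 := by
          linear_combination lam * hllsum - hll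
        calc lam ^ (k+2) = lam ^ k * lam ^ 2 := by ring
        _ = lam ^ k * (2 * (c:ℂ) * lam - 1) := by rw [hl2]
        _ = 2 * (c:ℂ) * lam ^ (k+1) - lam ^ k := by ring
      have h2' : lam' ^ (k+2) = 2 * (c:ℂ) * lam' ^ (k+1) - lam' ^ k := by
        have hl2 : lam' ^ 2 = 2 * (c:ℂ) * lam' - 1 := by
          linear_combination lam' * hllsum - hll
        calc lam' ^ (k+2) = lam' ^ k * lam' ^ 2 := by ring
        _ = lam' ^ k * (2 * (c:ℂ) * lam' - 1) := by rw [hl2]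
        _ = 2 * (c:ℂ) * lam' ^ (k+1) - lam' ^ k := by ring
      rw [h2, h2']
      ring
  -- moduli of eigenvalues
  have habs_lam : ‖lam‖ = 1 := by
    have h1 : ‖lam‖^2 = 1 := by
      rw [Complex.sq_norm, hlam]
      simp [Complex.normSq_apply]
      nlinarith [hs2]
    nlinarith [norm_nonneg lam]
  have habs_lam' : ‖lam'‖ = 1 := by
    have h1 : ‖lam'‖^2 = 1 := by
      rw [Complex.sq_norm, hlam']
      simp [Complex.normSq_apply]
      nlinarith [hs2]
    nlinarith [norm_nonneg lam']
  -- final bound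
  rw [(key n).1]
  have hbound : ‖(α:ℂ) * lam ^ n + (β:ℂ) * lam' ^ n‖ ≤ |α| + |β| := by
    calc ‖(α:ℂ) * lam ^ n + (β:ℂ) * lam' ^ n‖
        ≤ ‖(α:ℂ) * lam ^ n‖ + ‖(β:ℂ) * lam' ^ n‖ :=
          norm_add_le _ _
    _ = |α| * ‖lam‖^n + |β| * ‖lam'‖^n := by
        rw [norm_mul, norm_mul, norm_pow, norm_pow, Complex.norm_real, Complex.norm_real, Real.norm_eq_abs, Real.norm_eq_abs]
    _ = |α| + |β| := by rw [habs_lam, habs_lam']; ring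
  have hab : |α| + |β| ≤ 1 + r := by
    have hA : |α| = α := abs_of_nonneg (by rw [hα]; linarith)
    rcases abs_cases β with ⟨hB, _⟩ | ⟨hB, _⟩ <;> rw [hA, hB, hα, hβ] <;> linarith
  have hrhs : x * Real.tan φ / Real.sqrt ((1 / Real.cos φ) ^ 2 - x ^ 2) = r := by
    have h1 : (1 / Real.cos φ) ^ 2 - x ^ 2 = (1 - c^2) / (Real.cos φ)^2 := by
      rw [hc]; field_simp
    rw [h1, Real.sqrt_div (by nlinarith : (0:ℝ) ≤ 1 - c^2),
      Real.sqrt_sq hcpos.le, ← hsdef, hr, Real.tan_eq_sin_div_cos]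
    field_simp
  rw [hrhs]
  linarith [hbound, hab]
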